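/- Let M be an n×n real matrix of rank n−1 with unit vectors x and y satisfying x^*M = 0 and My = 0. Then (a) for all u, v ∈ [n]: ((−1)^{u+v}/det(M + xy^*)) · det(M_{\bar v,\bar u}) = (xy^*)(v,u), where M_{\bar v,\bar u} denotes the submatrix deleting row v and column u; and (b) if M⁺ denotes the Moore–Penrose pseudoinverse of M, then for all u, v ∈ [n]: M⁺(u,v) = ((−1)^{u+v}/det(M + xy^*)) · Σ_{c ≠ u} det((M ←_c xy^*)_{\bar v,\bar u}), where M ←_c xy^* is M with its c-th column replaced by the c-th column of xy^*. -/

import Mathlib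

open scoped Classical
open Finset Matrix

namespace Paper

variable {V : Type*} [Fintype V] [DecidableEq V]

/-- Out-degree of `u` in the weighted digraph with weight function `ω`. -/
noncomputable def deg (ω : V → V → ℝ) (u : V) : ℝ := ∑ v, ω u v

/-- A weighted digraph is strongly connected if every vertex can reach every other
vertex along edges of positive weight. -/
def StronglyConnected (ω : V → V → ℝ) : Prop :=
  ∀ u v : V, Relation.ReflTransGen (fun a b => 0 < ω a b) u v

/-- The combinatorial Laplacian `L = D - A` of a weighted digraph. -/
noncomputable def lap (ω : V → V → ℝ) : Matrix V V ℝ :=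
  Matrix.of fun u v => (if u = v then deg ω u else 0) - ω u v

/-- The transition probability matrix `P = D⁻¹ A` of the random walk. -/
noncomputable def trans (ω : V → V → ℝ) : Matrix V V ℝ :=
  Matrix.of fun u v => ω u v / deg ω u

/-- `G` is the Moore–Penrose pseudoinverse of `M` (four Penrose conditions). -/
def IsMoorePenrose (M G : Matrix V V ℝ) : Prop :=
  M * G * M = M ∧ G * M * G = G ∧ (M * G)ᵀ = M * G ∧ (G * M)ᵀ = G * M

/-- `v` reaches `r` under iteration of the parent function `f`. -/
def Reaches (f : V → V) (v r : V) : Prop := ∃ k : ℕ, f^[k] v = r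

/-- `f` encodes a spanning in-tree of the weighted digraph `ω` rooted at `r`:
every non-root vertex has its unique out-edge `(v, f v)` an edge of the digraph,
the root is a fixed point, and every vertex reaches the root. -/
def IsInTree (ω : V → V → ℝ) (r : V) (f : V → V) : Prop :=
  f r = r ∧ (∀ v, v ≠ r → 0 < ω v (f v)) ∧ ∀ v, Reaches f v r

/-- The weight of the spanning in-tree encoded by `f` with root `r`. -/
noncomputable def treeWeight (ω : V → V → ℝ) (r : V) (f : V → V) : ℝ :=
  ∏ v ∈ Finset.univ.erase r, ω v (f v)

/-- `τ_r`: total weight of spanning in-trees rooted at `r`. -/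
noncomputable def tau (ω : V → V → ℝ) (r : V) : ℝ :=
  ∑ f ∈ Finset.univ.filter (fun f : V → V => IsInTree ω r f), treeWeight ω r f

/-- `f` encodes a rooted spanning 2-forest with (distinct) roots `r₁`, `r₂`. -/
def IsForest2 (ω : V → V → ℝ) (r₁ r₂ : V) (f : V → V) : Prop :=
  r₁ ≠ r₂ ∧ f r₁ = r₁ ∧ f r₂ = r₂ ∧ (∀ v, v ≠ r₁ → v ≠ r₂ → 0 < ω v (f v)) ∧
    ∀ v, Reaches f v r₁ ∨ Reaches f v r₂

/-- The weight of the rooted spanning 2-forest encoded by `f` with roots `r₁`, `r₂`. -/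
noncomputable def forestWeight (ω : V → V → ℝ) (r₁ r₂ : V) (f : V → V) : ℝ :=
  ∏ v ∈ (Finset.univ.erase r₁).erase r₂, ω v (f v)

/-- The component of the root `b`: vertices reaching `b` under `f`. -/
noncomputable def comp (f : V → V) (b : V) : Finset V :=
  Finset.univ.filter (fun z => Reaches f z b)

/-! ### Undirected weighted graphs, edges as unordered pairs -/

/-- Weighted degree in an undirected weighted graph given by `ωs : Sym2 V → ℝ`. -/
noncomputable def degS (ωs : Sym2 V → ℝ) (u : V) : ℝ := ∑ v, ωs s(u, v)

/-- The volume of an undirected weighted graph. -/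
noncomputable def volS (ωs : Sym2 V → ℝ) : ℝ := ∑ u, degS ωs u

/-- Connectivity of an undirected weighted graph. -/
def ConnectedW (ωs : Sym2 V → ℝ) : Prop :=
  ∀ u v : V, Relation.ReflTransGen (fun a b => 0 < ωs s(a, b)) u v

/-- An edge set `E` is a spanning tree of the weighted undirected graph `ωs`. -/
def IsWTree (ωs : Sym2 V → ℝ) (E : Finset (Sym2 V)) : Prop :=
  (∀ e ∈ E, 0 < ωs e) ∧ (SimpleGraph.fromEdgeSet (E : Set (Sym2 V))).IsAcyclic ∧
    (SimpleGraph.fromEdgeSet (E : Set (Sym2 V))).Connected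

/-- An edge set `E` is a spanning 2-forest of the weighted undirected graph `ωs`
(acyclic, with exactly two connected components). -/
def IsWTwoForest (ωs : Sym2 V → ℝ) (E : Finset (Sym2 V)) : Prop :=
  (∀ e ∈ E, 0 < ωs e) ∧ (SimpleGraph.fromEdgeSet (E : Set (Sym2 V))).IsAcyclic ∧
    Nat.card (SimpleGraph.fromEdgeSet (E : Set (Sym2 V))).ConnectedComponent = 2

/-- The weight of a subgraph given by an edge set. -/
noncomputable def wgt (ωs : Sym2 V → ℝ) (E : Finset (Sym2 V)) : ℝ := ∏ e ∈ E, ωs e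

/-- Total weight of spanning trees of the weighted undirected graph `ωs`. -/
noncomputable def tauW (ωs : Sym2 V → ℝ) : ℝ :=
  ∑ E ∈ Finset.univ.filter (fun E : Finset (Sym2 V) => IsWTree ωs E), wgt ωs E

/-- The combinatorial Laplacian of a weighted undirected graph. -/
noncomputable def lapW (ωs : Sym2 V → ℝ) : Matrix V V ℝ :=
  Matrix.of fun u v => (if u = v then degS ωs u else 0) - ωs s(u, v)

/-! ### Simple graphs -/

/-- An edge set `E` is a spanning tree of the simple graph `G`. -/
def IsSTree (G : SimpleGraph V) (E : Finset (Sym2 V)) : Prop :=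
  (E : Set (Sym2 V)) ⊆ G.edgeSet ∧ (SimpleGraph.fromEdgeSet (E : Set (Sym2 V))).IsAcyclic ∧
    (SimpleGraph.fromEdgeSet (E : Set (Sym2 V))).Connected

/-- An edge set `E` is a spanning 2-forest of the simple graph `G`. -/
def IsSTwoForest (G : SimpleGraph V) (E : Finset (Sym2 V)) : Prop :=
  (E : Set (Sym2 V)) ⊆ G.edgeSet ∧ (SimpleGraph.fromEdgeSet (E : Set (Sym2 V))).IsAcyclic ∧
    Nat.card (SimpleGraph.fromEdgeSet (E : Set (Sym2 V))).ConnectedComponent = 2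

/-- The number of spanning trees of the simple graph `G`. -/
noncomputable def treeCount (G : SimpleGraph V) : ℕ :=
  (Finset.univ.filter (fun E : Finset (Sym2 V) => IsSTree G E)).card


lemma det_rows_add {I : Type*} [Fintype I] [DecidableEq I]
    (B : Matrix I I ℝ) (a b : I → ℝ) :
    (B + Matrix.vecMulVec b a).det = B.det + ∑ c, b c * (B.updateRow c a).det := by
  classical
  set g : Finset I → ℝ :=
    fun s => (Matrix.of (s.piecewise (fun i => b i • a) fun i => B i)).det with hg
  have Hdet : (B + Matrix.vecMulVec b a).det = ∑ s : Finset I, g s := by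
    have hBv : B + Matrix.vecMulVec b a = Matrix.of ((fun i => b i • a) + fun i => B i) := by
      ext i j
      simp [Matrix.vecMulVec_apply, mul_comm, add_comm]
    rw [hBv]
    exact MultilinearMap.map_add_univ
      ((Matrix.detRowAlternating : (I → ℝ) [⋀^I]→ₗ[ℝ] ℝ).toMultilinearMap)
      (fun i => b i • a) (fun i => B i)
  have hge : g ∅ = B.det := by
    rw [hg]; simp only [Finset.piecewise_empty]; rfl
  have hgs : ∀ c : I, g {c} = b c * (B.updateRow c a).det := by
    intro c
    have hmat : (Matrix.of (({c} : Finset I).piecewise (fun i => b i • a) fun i => B i))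
        = B.updateRow c (b c • a) := by
      ext i j
      by_cases h : i = c
      · subst h; simp [Finset.piecewise]
      · simp [Finset.piecewise, h, Matrix.updateRow_ne h]
    rw [hg]
    simp only [hmat]
    rw [Matrix.det_updateRow_smul]
  have hg2 : ∀ s : Finset I, 2 ≤ s.card → g s = 0 := by
    intro s hs
    obtain ⟨i, hi⟩ := Finset.card_pos.mp (by omega : 0 < s.card)
    obtain ⟨j, hj, hji⟩ := Finset.exists_mem_ne (by omega : 1 < s.card) i
    have hij : i ≠ j := Ne.symm hji
    set P := Matrix.of (s.piecewise (fun i => b i • a) fun i => B i) with hP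
    have hPi : P i = b i • a := by
      rw [hP]
      show (s.piecewise (fun i => b i • a) fun i => B i) i = b i • a
      exact Finset.piecewise_eq_of_mem _ _ _ hi
    have hPj : P j = b j • a := by
      rw [hP]
      show (s.piecewise (fun i => b i • a) fun i => B i) j = b j • a
      exact Finset.piecewise_eq_of_mem _ _ _ hj
    have h1 : P.det = b i * (P.updateRow i a).det := by
      conv_lhs => rw [← Matrix.updateRow_eq_self P i, hPi]
      rw [Matrix.det_updateRow_smul]
    have h2 : (P.updateRow i a) j = b j • a := by
      rw [Matrix.updateRow_ne (Ne.symm hij)]; exact hPj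
    have h3 : (P.updateRow i a).det = b j * ((P.updateRow i a).updateRow j a).det := by
      conv_lhs => rw [← Matrix.updateRow_eq_self (P.updateRow i a) j, h2]
      rw [Matrix.det_updateRow_smul]
    have h4 : ((P.updateRow i a).updateRow j a).det = 0 := by
      apply Matrix.det_zero_of_row_eq hij
      rw [Matrix.updateRow_ne hij, Matrix.updateRow_self, Matrix.updateRow_self]
    show P.det = 0
    rw [h1, h3, h4]; ring
  have hT : ∑ s : Finset I, g s
      = ∑ s ∈ insert (∅ : Finset I) (Finset.univ.image fun c : I => ({c} : Finset I)), g s := by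
    symm
    apply Finset.sum_subset (Finset.subset_univ _)
    intro s _ hs
    apply hg2
    by_contra h
    push_neg at h
    have h' : s.card = 0 ∨ s.card = 1 := by omega
    rcases h' with h0 | h1
    · exact hs (by simp [Finset.card_eq_zero.mp h0])
    · obtain ⟨c, rfl⟩ := Finset.card_eq_one.mp h1
      exact hs (Finset.mem_insert_of_mem (Finset.mem_image_of_mem _ (Finset.mem_univ c)))
  rw [Hdet, hT, Finset.sum_insert (by simp), hge]
  congr 1
  rw [Finset.sum_image (fun a _ b _ h => Finset.singleton_inj.mp h)]
  exact Finset.sum_congr rfl fun c _ => hgs c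

lemma det_add_vecMulVec {I : Type*} [Fintype I] [DecidableEq I]
    (A : Matrix I I ℝ) (a b : I → ℝ) :
    (A + Matrix.vecMulVec a b).det = A.det + ∑ c, b c * (A.updateCol c a).det := by
  rw [← Matrix.det_transpose]
  have h : (A + Matrix.vecMulVec a b)ᵀ = Aᵀ + Matrix.vecMulVec b a := by
    ext i j; simp [Matrix.vecMulVec_apply, mul_comm]
  rw [h, det_rows_add]
  congr 1
  · exact Matrix.det_transpose A
  · refine Finset.sum_congr rfl fun c _ => ?_
    rw [Matrix.updateRow_transpose, Matrix.det_transpose]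



lemma submatrix_updateColumn_succAbove_ne {m' : Type*} {k : ℕ}
    (A : Matrix m' (Fin (k + 1)) ℝ) (u : Fin (k + 1)) (c : Fin k) (w : m' → ℝ)
    (r : Fin k → m') :
    (A.updateCol (u.succAbove c) w).submatrix r u.succAbove
      = (A.submatrix r u.succAbove).updateCol c (w ∘ r) := by
  ext i j
  simp only [Matrix.submatrix_apply, Matrix.updateCol_apply, Fin.succAbove_right_inj,
    Function.comp_apply]

/-- **The pseudoinverse lemma.**
Let `M` be an `(n+1)×(n+1)` real matrix of rank `n` with unit left null vector `x`
and unit right null vector `y`.  Part (a): a cofactor of `M` recovers `(xy^*)(v,u)`;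
part (b): the Moore–Penrose pseudoinverse `M⁺` is given by cofactors of the matrices
obtained from `M` by replacing a single column `c ≠ u` by the corresponding column of
`xy^*`.  `M.submatrix v.succAbove u.succAbove` is `M` with row `v` and column `u`
deleted. -/
theorem pseudoinverse_cofactor_lemma
    {n : ℕ} (M : Matrix (Fin (n + 1)) (Fin (n + 1)) ℝ)
    (hrank : M.rank = n)
    (x y : Fin (n + 1) → ℝ)
    (hx : ∑ i, x i ^ 2 = 1) (hy : ∑ i, y i ^ 2 = 1)
    (hxM : ∀ j, ∑ i, x i * M i j = 0) (hMy : ∀ i, ∑ j, M i j * y j = 0)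
    (Mp : Matrix (Fin (n + 1)) (Fin (n + 1)) ℝ) (hMp : IsMoorePenrose M Mp)
    (u v : Fin (n + 1)) :
    ((-1 : ℝ) ^ ((u : ℕ) + (v : ℕ)) / (M + Matrix.vecMulVec x y).det) *
        (M.submatrix v.succAbove u.succAbove).det = x v * y u ∧
      Mp u v = ((-1 : ℝ) ^ ((u : ℕ) + (v : ℕ)) / (M + Matrix.vecMulVec x y).det) *
        ∑ c ∈ Finset.univ.erase u,
          ((M.updateCol c (fun i => x i * y c)).submatrix v.succAbove u.succAbove).det := by
  obtain ⟨h1, h2, h3, h4⟩ := hMp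
  have hyne : y ≠ 0 := by
    intro h; rw [h] at hy; simp at hy
  have hxne : x ≠ 0 := by
    intro h; rw [h] at hx; simp at hx
  have hMy' : M *ᵥ y = 0 := by
    funext i
    simpa [Matrix.mulVec, dotProduct] using hMy i
  have hxM' : Mᵀ *ᵥ x = 0 := by
    funext j
    simpa [Matrix.mulVec, dotProduct, Matrix.transpose_apply, mul_comm] using hxM j
  have hxx : ∑ i, x i * x i = 1 := by simpa [pow_two] using hx
  have hyy : ∑ i, y i * y i = 1 := by simpa [pow_two] using hy
  -- kernels
  have hker : ∀ z, M *ᵥ z = 0 → ∃ t : ℝ, z = t • y := by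
    intro z hz
    have hrk := LinearMap.finrank_range_add_finrank_ker (Matrix.mulVecLin M)
    rw [Module.finrank_fin_fun] at hrk
    have hr : Module.finrank ℝ (LinearMap.range (Matrix.mulVecLin M)) = n := hrank
    have hk : Module.finrank ℝ (LinearMap.ker (Matrix.mulVecLin M)) = 1 := by omega
    have hsp : Submodule.span ℝ {y} ≤ LinearMap.ker (Matrix.mulVecLin M) := by
      rw [Submodule.span_le, Set.singleton_subset_iff, SetLike.mem_coe, LinearMap.mem_ker,
        Matrix.mulVecLin_apply]
      exact hMy'
    have heq : Submodule.span ℝ {y} = LinearMap.ker (Matrix.mulVecLin M) :=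
      Submodule.eq_of_le_of_finrank_le hsp (by rw [hk, finrank_span_singleton hyne])
    have hz' : z ∈ LinearMap.ker (Matrix.mulVecLin M) := by
      rw [LinearMap.mem_ker, Matrix.mulVecLin_apply]; exact hz
    rw [← heq, Submodule.mem_span_singleton] at hz'
    obtain ⟨t, ht⟩ := hz'
    exact ⟨t, ht.symm⟩
  have hkerT : ∀ z, Mᵀ *ᵥ z = 0 → ∃ t : ℝ, z = t • x := by
    intro z hz
    have hrk := LinearMap.finrank_range_add_finrank_ker (Matrix.mulVecLin Mᵀ)
    rw [Module.finrank_fin_fun] at hrk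
    have hr : Module.finrank ℝ (LinearMap.range (Matrix.mulVecLin Mᵀ)) = n := by
      have h5 := Matrix.rank_transpose M
      rw [hrank] at h5
      exact h5
    have hk : Module.finrank ℝ (LinearMap.ker (Matrix.mulVecLin Mᵀ)) = 1 := by omega
    have hsp : Submodule.span ℝ {x} ≤ LinearMap.ker (Matrix.mulVecLin Mᵀ) := by
      rw [Submodule.span_le, Set.singleton_subset_iff, SetLike.mem_coe, LinearMap.mem_ker,
        Matrix.mulVecLin_apply]
      exact hxM'
    have heq : Submodule.span ℝ {x} = LinearMap.ker (Matrix.mulVecLin Mᵀ) :=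
      Submodule.eq_of_le_of_finrank_le hsp (by rw [hk, finrank_span_singleton hxne])
    have hz' : z ∈ LinearMap.ker (Matrix.mulVecLin Mᵀ) := by
      rw [LinearMap.mem_ker, Matrix.mulVecLin_apply]; exact hz
    rw [← heq, Submodule.mem_span_singleton] at hz'
    obtain ⟨t, ht⟩ := hz'
    exact ⟨t, ht.symm⟩
  -- Penrose consequences
  have hMpx : Mp *ᵥ x = 0 := by
    calc Mp *ᵥ x = (Mp * (M * Mp)) *ᵥ x := by rw [← Matrix.mul_assoc, h2]
      _ = (Mp * (M * Mp)ᵀ) *ᵥ x := by rw [h3]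
      _ = Mp *ᵥ (Mpᵀ *ᵥ (Mᵀ *ᵥ x)) := by
          rw [Matrix.transpose_mul, Matrix.mulVec_mulVec, Matrix.mulVec_mulVec,
            Matrix.mul_assoc]
      _ = 0 := by rw [hxM']; simp
  have hyMp : y ᵥ* Mp = 0 := by
    have e1 : y ᵥ* (Mp * M) = 0 := by
      rw [← h4, Matrix.vecMul_transpose, ← Matrix.mulVec_mulVec, hMy', Matrix.mulVec_zero]
    calc y ᵥ* Mp = y ᵥ* (Mp * M * Mp) := by rw [h2]
      _ = (y ᵥ* (Mp * M)) ᵥ* Mp := by rw [Matrix.vecMul_vecMul]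
      _ = 0 := by rw [e1]; simp
  -- M * Mp = 1 - x xᵀ
  have hxxM : Matrix.vecMulVec x x * M = 0 := by
    ext i j
    simp only [Matrix.mul_apply, Matrix.vecMulVec_apply, Matrix.zero_apply]
    simp only [mul_assoc]
    rw [← Finset.mul_sum, hxM j, mul_zero]
  have hMMp : M * Mp = 1 - Matrix.vecMulVec x x := by
    set Q := 1 - M * Mp - Matrix.vecMulVec x x with hQdef
    have hQM : Q * M = 0 := by
      rw [hQdef, Matrix.sub_mul, Matrix.sub_mul, Matrix.one_mul, h1, hxxM, sub_zero, sub_self]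
    have hvx : Matrix.vecMulVec x x *ᵥ x = x := by
      funext c
      have : (Matrix.vecMulVec x x *ᵥ x) c = ∑ j, x c * x j * x j := by
        simp [Matrix.mulVec, dotProduct, Matrix.vecMulVec_apply]
      rw [this]
      simp only [mul_assoc]
      rw [← Finset.mul_sum, hxx, mul_one]
    have hQx : Q *ᵥ x = 0 := by
      rw [hQdef, Matrix.sub_mulVec, Matrix.sub_mulVec, Matrix.one_mulVec,
        ← Matrix.mulVec_mulVec, hMpx, Matrix.mulVec_zero, hvx]
      simp
    have hQzero : Q = 0 := by
      have hrow : ∀ c, ∃ t : ℝ, (fun i => Q c i) = t • x := by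
        intro c
        apply hkerT
        funext j
        have hcj : ∑ k, Q c k * M k j = 0 := by
          have : (Q * M) c j = 0 := by rw [hQM]; simp
          rw [Matrix.mul_apply] at this
          exact this
        simpa [Matrix.mulVec, dotProduct, Matrix.transpose_apply, mul_comm] using hcj
      ext c i
      obtain ⟨t, ht⟩ := hrow c
      have htc : ∀ i, Q c i = t * x i := fun i => congrFun ht i
      have h0 : ∑ j, Q c j * x j = 0 := by
        have := congrFun hQx c
        simpa [Matrix.mulVec, dotProduct] using this
      have hts : ∑ j, Q c j * x j = t := by
        calc ∑ j, Q c j * x j = ∑ j, t * (x j * x j) := by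
              refine Finset.sum_congr rfl fun j _ => ?_
              rw [htc j]; ring
          _ = t * ∑ j, x j * x j := by rw [Finset.mul_sum]
          _ = t := by rw [hxx, mul_one]
      have ht0 : t = 0 := by rw [← hts]; exact h0
      simp [htc i, ht0]
    have h' : 1 - M * Mp - Matrix.vecMulVec x x = 0 := by rw [← hQdef]; exact hQzero
    have h'' : 1 - M * Mp = Matrix.vecMulVec x x := sub_eq_zero.mp h'
    rw [← h'']
    exact (sub_sub_cancel 1 (M * Mp)).symm
  -- N and G
  set N := M + Matrix.vecMulVec x y with hNdef
  set G := Mp + Matrix.vecMulVec y x with hGdef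
  have hMyx : M * Matrix.vecMulVec y x = 0 := by
    ext i j
    simp only [Matrix.mul_apply, Matrix.vecMulVec_apply, Matrix.zero_apply]
    simp only [← mul_assoc]
    rw [← Finset.sum_mul, hMy i, zero_mul]
  have hxyMp : Matrix.vecMulVec x y * Mp = 0 := by
    ext i j
    simp only [Matrix.mul_apply, Matrix.vecMulVec_apply, Matrix.zero_apply]
    simp only [mul_assoc]
    rw [← Finset.mul_sum]
    have : ∑ k, y k * Mp k j = 0 := by
      have := congrFun hyMp j
      simpa [Matrix.vecMul, dotProduct] using this
    rw [this, mul_zero]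
  have hxyyx : Matrix.vecMulVec x y * Matrix.vecMulVec y x = Matrix.vecMulVec x x := by
    ext i j
    simp only [Matrix.mul_apply, Matrix.vecMulVec_apply]
    calc ∑ k, x i * y k * (y k * x j) = x i * x j * ∑ k, y k * y k := by
          rw [Finset.mul_sum]; exact Finset.sum_congr rfl fun k _ => by ring
      _ = x i * x j := by rw [hyy, mul_one]
  have hNG : N * G = 1 := by
    rw [hNdef, hGdef, Matrix.add_mul, Matrix.mul_add, Matrix.mul_add, hMMp, hMyx, hxyMp,
      hxyyx]
    simp
  have hGN1 : G * N = 1 := mul_eq_one_comm.mp hNG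
  have hdetN : N.det ≠ 0 := by
    intro h
    have hd := congrArg Matrix.det hNG
    rw [Matrix.det_mul, h, zero_mul, Matrix.det_one] at hd
    norm_num at hd
  have hadjN : N.adjugate = N.det • G := by
    calc N.adjugate = 1 * N.adjugate := (Matrix.one_mul _).symm
      _ = G * N * N.adjugate := by rw [hGN1]
      _ = G * (N * N.adjugate) := by rw [Matrix.mul_assoc]
      _ = G * (N.det • 1) := by rw [Matrix.mul_adjugate]
      _ = N.det • G := by rw [Matrix.mul_smul, Matrix.mul_one]
  -- det M = 0 and adjugate M
  have hdetM : M.det = 0 := by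
    rw [← Matrix.exists_mulVec_eq_zero_iff]
    exact ⟨y, hyne, hMy'⟩
  have hMadj : M * M.adjugate = 0 := by
    rw [Matrix.mul_adjugate, hdetM, zero_smul]
  have hadjM0 : M.adjugate * M = 0 := by
    rw [Matrix.adjugate_mul, hdetM, zero_smul]
  have hcol : ∀ w, ∃ c : ℝ, (fun u' => M.adjugate u' w) = c • y := by
    intro w
    apply hker
    funext i
    have : (M * M.adjugate) i w = 0 := by rw [hMadj]; simp
    rw [Matrix.mul_apply] at this
    simpa [Matrix.mulVec, dotProduct] using this
  have hrowadj : ∀ u', ∃ d : ℝ, (fun w => M.adjugate u' w) = d • x := by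
    intro u'
    apply hkerT
    funext j
    have : (M.adjugate * M) u' j = 0 := by rw [hadjM0]; simp
    rw [Matrix.mul_apply] at this
    simpa [Matrix.mulVec, dotProduct, Matrix.transpose_apply, mul_comm] using this
  choose cc hcc using hcol
  choose dd hdd using hrowadj
  set γ : ℝ := ∑ w, y w * dd w with hγdef
  have hadjM : ∀ u' w, M.adjugate u' w = γ * (y u' * x w) := by
    intro u' w
    have hc : ∀ a, M.adjugate a w = cc w * y a := fun a => congrFun (hcc w) a
    have hd : ∀ a b, M.adjugate a b = dd a * x b := fun a b => congrFun (hdd a) b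
    have h5 : ∑ a, y a * M.adjugate a w = cc w := by
      calc ∑ a, y a * M.adjugate a w = ∑ a, cc w * (y a * y a) := by
            refine Finset.sum_congr rfl fun a _ => ?_
            rw [hc a]; ring
        _ = cc w * ∑ a, y a * y a := by rw [Finset.mul_sum]
        _ = cc w := by rw [hyy, mul_one]
    have h6 : ∑ a, y a * M.adjugate a w = γ * x w := by
      calc ∑ a, y a * M.adjugate a w = ∑ a, (y a * dd a) * x w := by
            refine Finset.sum_congr rfl fun a _ => ?_
            rw [hd a w]; ring
        _ = γ * x w := by rw [← Finset.sum_mul, hγdef]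
    rw [hc u', ← h5, h6]; ring
  -- γ = det N
  have hγ : γ = N.det := by
    have hexp : N.det = M.det + ∑ c, y c * (M.updateCol c x).det := by
      rw [hNdef]; exact det_add_vecMulVec M x y
    have hcr : ∀ c, (M.updateCol c x).det = γ * y c := by
      intro c
      have h7 : (M.updateCol c x).det = (M.adjugate *ᵥ x) c := by
        rw [← Matrix.cramer_eq_adjugate_mulVec, Matrix.cramer_apply]
      rw [h7]
      have : (M.adjugate *ᵥ x) c = ∑ w, γ * y c * (x w * x w) := by
        simp only [Matrix.mulVec, dotProduct]
        refine Finset.sum_congr rfl fun w _ => ?_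
        rw [hadjM c w]; ring
      rw [this, ← Finset.mul_sum, hxx, mul_one]
    rw [hexp, hdetM, zero_add]
    calc γ = γ * ∑ c, y c * y c := by rw [hyy, mul_one]
      _ = ∑ c, y c * (γ * y c) := by rw [Finset.mul_sum]; exact Finset.sum_congr rfl fun c _ => by ring
      _ = ∑ c, y c * (M.updateCol c x).det := by
          exact Finset.sum_congr rfl fun c _ => by rw [hcr c]
  -- sign helper
  have hone : (-1:ℝ)^((u:ℕ)+(v:ℕ)) * (-1:ℝ)^((v:ℕ)+(u:ℕ)) = 1 := by
    rw [add_comm (v:ℕ) (u:ℕ), ← mul_pow]; norm_num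
  have hs1 : (-1:ℝ)^((v:ℕ)+(u:ℕ)) * (-1:ℝ)^((v:ℕ)+(u:ℕ)) = 1 := by
    rw [← mul_pow]; norm_num
  -- part (a) key
  have hD : (M.submatrix v.succAbove u.succAbove).det
      = (-1:ℝ)^((v:ℕ)+(u:ℕ)) * (N.det * (y u * x v)) := by
    have h8 := Matrix.adjugate_fin_succ_eq_det_submatrix M u v
    rw [hadjM u v, hγ] at h8
    calc (M.submatrix v.succAbove u.succAbove).det
        = ((-1:ℝ)^((v:ℕ)+(u:ℕ)) * (-1:ℝ)^((v:ℕ)+(u:ℕ)))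
          * (M.submatrix v.succAbove u.succAbove).det := by rw [hs1, one_mul]
      _ = (-1:ℝ)^((v:ℕ)+(u:ℕ))
          * ((-1:ℝ)^((v:ℕ)+(u:ℕ)) * (M.submatrix v.succAbove u.succAbove).det) := by ring
      _ = (-1:ℝ)^((v:ℕ)+(u:ℕ)) * (N.det * (y u * x v)) := by
          rw [← h8]
  constructor
  · rw [hD, div_mul_eq_mul_div,
      show ((-1:ℝ)^((u:ℕ)+(v:ℕ)) * ((-1:ℝ)^((v:ℕ)+(u:ℕ)) * (N.det * (y u * x v))))
        = N.det * (x v * y u) from by rw [← mul_assoc, hone]; ring]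
    exact mul_div_cancel_left₀ _ hdetN
  -- part (b)
  · have hNsub : N.submatrix v.succAbove u.succAbove
        = M.submatrix v.succAbove u.succAbove
          + Matrix.vecMulVec (x ∘ v.succAbove) (y ∘ u.succAbove) := by
      ext i j
      simp [hNdef, Matrix.vecMulVec_apply]
    have hdet_sub : (N.submatrix v.succAbove u.succAbove).det
        = (M.submatrix v.succAbove u.succAbove).det
          + ∑ c' : Fin n, y (u.succAbove c')
              * ((M.submatrix v.succAbove u.succAbove).updateCol c'
                  (x ∘ v.succAbove)).det := by
      rw [hNsub, det_add_vecMulVec]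
      simp only [Function.comp_apply]
    have hterm : ∀ c' : Fin n,
        ((M.updateCol (u.succAbove c') (fun i => x i * y (u.succAbove c'))).submatrix
            v.succAbove u.succAbove).det
          = y (u.succAbove c')
              * ((M.submatrix v.succAbove u.succAbove).updateCol c'
                  (x ∘ v.succAbove)).det := by
      intro c'
      rw [submatrix_updateColumn_succAbove_ne]
      have hfun : ((fun i => x i * y (u.succAbove c')) ∘ v.succAbove)
          = y (u.succAbove c') • (x ∘ v.succAbove) := by
        funext i
        simp [mul_comm]
      rw [hfun, Matrix.det_updateCol_smul]
    have hsum : ∑ c ∈ Finset.univ.erase u,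
        ((M.updateCol c (fun i => x i * y c)).submatrix v.succAbove u.succAbove).det
        = (N.submatrix v.succAbove u.succAbove).det
          - (M.submatrix v.succAbove u.succAbove).det := by
      set F : Fin (n+1) → ℝ := fun c =>
        ((M.updateCol c (fun i => x i * y c)).submatrix v.succAbove u.succAbove).det with hF
      have h10 : ∑ c, F c = F u + ∑ c' : Fin n, F (u.succAbove c') :=
        Fin.sum_univ_succAbove F u
      have h11 : ∑ c ∈ Finset.univ.erase u, F c + F u = ∑ c, F c :=
        Finset.sum_erase_add _ _ (Finset.mem_univ u)
      have h12 : ∑ c' : Fin n, F (u.succAbove c')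
          = (N.submatrix v.succAbove u.succAbove).det
            - (M.submatrix v.succAbove u.succAbove).det := by
        calc ∑ c' : Fin n, F (u.succAbove c')
            = ∑ c' : Fin n, y (u.succAbove c')
                * ((M.submatrix v.succAbove u.succAbove).updateCol c'
                    (x ∘ v.succAbove)).det :=
              Finset.sum_congr rfl fun c' _ => hterm c'
          _ = (N.submatrix v.succAbove u.succAbove).det
              - (M.submatrix v.succAbove u.succAbove).det := by rw [hdet_sub]; ring
      linarith [h10, h11, h12]
    have h14 : N.adjugate u v = N.det * (Mp u v + y u * x v) := by
      rw [hadjN, hGdef]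
      simp [Matrix.vecMulVec_apply]
    have hDN : (N.submatrix v.succAbove u.succAbove).det
        = (-1:ℝ)^((v:ℕ)+(u:ℕ)) * (N.det * (Mp u v + y u * x v)) := by
      have h13 := Matrix.adjugate_fin_succ_eq_det_submatrix N u v
      rw [h14] at h13
      calc (N.submatrix v.succAbove u.succAbove).det
          = ((-1:ℝ)^((v:ℕ)+(u:ℕ)) * (-1:ℝ)^((v:ℕ)+(u:ℕ)))
            * (N.submatrix v.succAbove u.succAbove).det := by rw [hs1, one_mul]
        _ = (-1:ℝ)^((v:ℕ)+(u:ℕ))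
            * ((-1:ℝ)^((v:ℕ)+(u:ℕ)) * (N.submatrix v.succAbove u.succAbove).det) := by ring
        _ = (-1:ℝ)^((v:ℕ)+(u:ℕ)) * (N.det * (Mp u v + y u * x v)) := by rw [← h13]
    rw [hsum, hDN, hD,
      show ((-1:ℝ)^((v:ℕ)+(u:ℕ)) * (N.det * (Mp u v + y u * x v))
          - (-1:ℝ)^((v:ℕ)+(u:ℕ)) * (N.det * (y u * x v)))
        = (-1:ℝ)^((v:ℕ)+(u:ℕ)) * (N.det * Mp u v) from by ring,
      div_mul_eq_mul_div,
      show ((-1:ℝ)^((u:ℕ)+(v:ℕ)) * ((-1:ℝ)^((v:ℕ)+(u:ℕ)) * (N.det * Mp u v)))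
        = N.det * Mp u v from by rw [← mul_assoc, hone]; ring]
    exact (mul_div_cancel_left₀ _ hdetN).symm


end Paper
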